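/- arXiv:1005.0768 — 3 statements merged into one kernel-verified Lean document; each statement's English description precedes it below -/
import Mathlib

section
/- Two-firm equity cross-ownership: for all a₁, a₂, b₁, b₂ ≥ 0, the system of equations s₁ = (a₁ + 0.5·s₂ − b₁)⁺ and s₂ = (a₂ + 0.5·s₁ − b₂)⁺ has exactly one solution (s₁, s₂) ∈ ℝ², and this solution satisfies s₁ ≥ 0 and s₂ ≥ 0. -/
lemma uniq_aux (a₁ a₂ b₁ b₂ : ℝ) (p q : ℝ × ℝ)
    (hp : p.1 = max (a₁ + 0.5 * p.2 - b₁) 0 ∧ p.2 = max (a₂ + 0.5 * p.1 - b₂) 0)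
    (hq : q.1 = max (a₁ + 0.5 * q.2 - b₁) 0 ∧ q.2 = max (a₂ + 0.5 * q.1 - b₂) 0) :
    q = p := by
  have h1 : |p.1 - q.1| ≤ 0.5 * |p.2 - q.2| := by
    rw [hp.1, hq.1]
    calc |max (a₁ + 0.5 * p.2 - b₁) 0 - max (a₁ + 0.5 * q.2 - b₁) 0|
        ≤ |(a₁ + 0.5 * p.2 - b₁) - (a₁ + 0.5 * q.2 - b₁)| := abs_max_sub_max_le_abs _ _ _
      _ = |0.5 * (p.2 - q.2)| := by ring_nf
      _ = 0.5 * |p.2 - q.2| := by rw [abs_mul]; norm_num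
  have h2 : |p.2 - q.2| ≤ 0.5 * |p.1 - q.1| := by
    rw [hp.2, hq.2]
    calc |max (a₂ + 0.5 * p.1 - b₂) 0 - max (a₂ + 0.5 * q.1 - b₂) 0|
        ≤ |(a₂ + 0.5 * p.1 - b₂) - (a₂ + 0.5 * q.1 - b₂)| := abs_max_sub_max_le_abs _ _ _
      _ = |0.5 * (p.1 - q.1)| := by ring_nf
      _ = 0.5 * |p.1 - q.1| := by rw [abs_mul]; norm_num
  have hpos1 := abs_nonneg (p.1 - q.1)
  have hpos2 := abs_nonneg (p.2 - q.2)
  have e1 : |p.1 - q.1| = 0 := by linarith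
  have e2 : |p.2 - q.2| = 0 := by linarith
  have := sub_eq_zero.mp (abs_eq_zero.mp e1)
  have := sub_eq_zero.mp (abs_eq_zero.mp e2)
  exact (Prod.ext ‹p.1 = q.1› ‹p.2 = q.2›).symm

/-- Two-firm 50% equity cross-ownership: the system s₁ = (a₁ + 0.5·s₂ − b₁)⁺,
s₂ = (a₂ + 0.5·s₁ − b₂)⁺ has exactly one solution, and it is nonnegative. -/
theorem two_firm_equity_cross_ownership (a₁ a₂ b₁ b₂ : ℝ)
    (ha₁ : 0 ≤ a₁) (ha₂ : 0 ≤ a₂) (hb₁ : 0 ≤ b₁) (hb₂ : 0 ≤ b₂) :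
    (∃! p : ℝ × ℝ,
      p.1 = max (a₁ + 0.5 * p.2 - b₁) 0 ∧ p.2 = max (a₂ + 0.5 * p.1 - b₂) 0) ∧
    ∀ p : ℝ × ℝ,
      (p.1 = max (a₁ + 0.5 * p.2 - b₁) 0 ∧ p.2 = max (a₂ + 0.5 * p.1 - b₂) 0) →
      0 ≤ p.1 ∧ 0 ≤ p.2 := by
  constructor
  · -- existence and uniqueness
    set c₁ := a₁ - b₁ with hc₁
    set c₂ := a₂ - b₂ with hc₂
    have key : ∃ p : ℝ × ℝ,
        p.1 = max (a₁ + 0.5 * p.2 - b₁) 0 ∧ p.2 = max (a₂ + 0.5 * p.1 - b₂) 0 := by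
      rcases le_or_gt 0 (c₁ + 0.5 * c₂) with hA | hA
      · rcases le_or_gt 0 (c₂ + 0.5 * c₁) with hB | hB
        · refine ⟨((c₁ + 0.5 * c₂) / 0.75, (c₂ + 0.5 * c₁) / 0.75), ?_, ?_⟩ <;> simp only
          · rw [max_eq_left (by rw [show a₁ + 0.5 * ((c₂ + 0.5 * c₁)/0.75) - b₁ = (c₁ + 0.5*c₂)/0.75 by field_simp [hc₁,hc₂]; ring]; exact div_nonneg hA (by norm_num))]
            field_simp [hc₁, hc₂]; ring
          · rw [max_eq_left (by rw [show a₂ + 0.5 * ((c₁ + 0.5 * c₂)/0.75) - b₂ = (c₂ + 0.5*c₁)/0.75 by field_simp [hc₁,hc₂]; ring]; exact div_nonneg hB (by norm_num))]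
            field_simp [hc₁, hc₂]; ring
        · -- s₂ = 0, s₁ = c₁ (need c₁ ≥ 0: since c₁ + 0.5 c₂ ≥ 0 and c₂ + 0.5 c₁ < 0 ⇒ c₂<0 ⇒ c₁>0)
          have hc₁pos : 0 ≤ c₁ := by nlinarith
          refine ⟨(c₁, 0), ?_, ?_⟩ <;> simp only
          · rw [max_eq_left (by linarith [hc₁pos])]; simp [hc₁]
          · rw [max_eq_right (by linarith)]
      · rcases le_or_gt 0 c₂ with hc2 | hc2
        · -- s₁ = 0, s₂ = c₂
          refine ⟨(0, c₂), ?_, ?_⟩ <;> simp only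
          · rw [max_eq_right (by linarith)]
          · rw [max_eq_left (by linarith)]; simp [hc₂]
        · have hc1 : c₁ ≤ 0 ∨ 0 < c₁ := le_or_gt c₁ 0
          rcases hc1 with hc1 | hc1
          · refine ⟨(0, 0), ?_, ?_⟩ <;> simp only
            · rw [max_eq_right (by linarith)]
            · rw [max_eq_right (by linarith)]
          · -- c₁ > 0, c₂ + 0.5 c₁ < 0 since c₁ < -0.5 c₂ ⇒ c₂ + 0.5 c₁ < 0.75 c₂ < 0
            refine ⟨(c₁, 0), ?_, ?_⟩ <;> simp only
            · rw [max_eq_left (by linarith)]; simp [hc₁]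
            · rw [max_eq_right (by nlinarith)]
    obtain ⟨p, hp⟩ := key
    exact ⟨p, hp, fun q hq => uniq_aux a₁ a₂ b₁ b₂ p q hp hq⟩
  · intro p hp
    constructor
    · rw [hp.1]; exact le_max_right _ _
    · rw [hp.2]; exact le_max_right _ _
end

section
/- Two-firm debt cross-ownership: for all a₁, a₂, b₁, b₂ ≥ 0, the system of equations r₁ = min{b₁, (a₁ + 0.5·r₂)⁺} and r₂ = min{b₂, (a₂ + 0.5·r₁)⁺} has exactly one solution (r₁, r₂) ∈ ℝ², and this solution satisfies 0 ≤ r₁ ≤ b₁ and 0 ≤ r₂ ≤ b₂. -/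
private lemma lip_aux (b x y : ℝ) :
    |min b (max x 0) - min b (max y 0)| ≤ |x - y| := by
  calc |min b (max x 0) - min b (max y 0)|
      ≤ max |b - b| |max x 0 - max y 0| := abs_min_sub_min_le_max _ _ _ _
    _ ≤ |x - y| := by
        rw [sub_self, abs_zero]
        exact max_le (abs_nonneg _) (abs_max_sub_max_le_abs x y 0)

/-- Two-firm 50% debt cross-ownership: the system r₁ = min{b₁, (a₁ + 0.5·r₂)⁺},
r₂ = min{b₂, (a₂ + 0.5·r₁)⁺} has exactly one solution, and it satisfies
0 ≤ r₁ ≤ b₁ and 0 ≤ r₂ ≤ b₂. -/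
theorem two_firm_debt_cross_ownership (a₁ a₂ b₁ b₂ : ℝ)
    (ha₁ : 0 ≤ a₁) (ha₂ : 0 ≤ a₂) (hb₁ : 0 ≤ b₁) (hb₂ : 0 ≤ b₂) :
    (∃! p : ℝ × ℝ,
      p.1 = min b₁ (max (a₁ + 0.5 * p.2) 0) ∧ p.2 = min b₂ (max (a₂ + 0.5 * p.1) 0)) ∧
    ∀ p : ℝ × ℝ,
      (p.1 = min b₁ (max (a₁ + 0.5 * p.2) 0) ∧ p.2 = min b₂ (max (a₂ + 0.5 * p.1) 0)) →
      (0 ≤ p.1 ∧ p.1 ≤ b₁) ∧ (0 ≤ p.2 ∧ p.2 ≤ b₂) := by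
  -- define the composed map on r₁
  set g : ℝ → ℝ := fun r => min b₁ (max (a₁ + 0.5 * min b₂ (max (a₂ + 0.5 * r) 0)) 0) with hg
  have hgc : Continuous g := by fun_prop
  have hcont : ContinuousOn (fun r => g r - r) (Set.Icc 0 b₁) :=
    (hgc.sub continuous_id).continuousOn
  have h0 : 0 ≤ g 0 - 0 := by
    simp only [hg, sub_zero]
    exact le_min hb₁ (le_max_right _ _)
  have hb : g b₁ - b₁ ≤ 0 := by
    simp only [hg]
    have := min_le_left b₁ (max (a₁ + 0.5 * min b₂ (max (a₂ + 0.5 * b₁) 0)) 0)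
    linarith
  have hIVT := intermediate_value_Icc' hb₁ hcont
  have : (0 : ℝ) ∈ Set.Icc (g b₁ - b₁) (g 0 - 0) := ⟨hb, h0⟩
  obtain ⟨r, _, hr⟩ := hIVT this
  have hfix : g r = r := by simpa [sub_eq_zero] using hr
  have hfix' : r = min b₁ (max (a₁ + 0.5 * min b₂ (max (a₂ + 0.5 * r) 0)) 0) := hfix.symm
  set r₂ := min b₂ (max (a₂ + 0.5 * r) 0) with hr₂
  have hsol : (r, r₂).1 = min b₁ (max (a₁ + 0.5 * (r, r₂).2) 0) ∧
      (r, r₂).2 = min b₂ (max (a₂ + 0.5 * (r, r₂).1) 0) := ⟨hfix.symm, rfl⟩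
  have huniq : ∀ q : ℝ × ℝ,
      (q.1 = min b₁ (max (a₁ + 0.5 * q.2) 0) ∧ q.2 = min b₂ (max (a₂ + 0.5 * q.1) 0)) →
      q = (r, r₂) := by
    intro q ⟨hq1, hq2⟩
    have e1 : |q.1 - r| ≤ 0.5 * |q.2 - r₂| := by
      calc |q.1 - r| = |min b₁ (max (a₁ + 0.5 * q.2) 0) - min b₁ (max (a₁ + 0.5 * r₂) 0)| := by
            rw [← hq1, ← hfix']
        _ ≤ |(a₁ + 0.5 * q.2) - (a₁ + 0.5 * r₂)| := lip_aux _ _ _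
        _ = 0.5 * |q.2 - r₂| := by
            rw [show (a₁ + 0.5 * q.2) - (a₁ + 0.5 * r₂) = 0.5 * (q.2 - r₂) by ring,
              abs_mul]
            norm_num
    have e2 : |q.2 - r₂| ≤ 0.5 * |q.1 - r| := by
      calc |q.2 - r₂| = |min b₂ (max (a₂ + 0.5 * q.1) 0) - min b₂ (max (a₂ + 0.5 * r) 0)| := by
            rw [← hq2]
        _ ≤ |(a₂ + 0.5 * q.1) - (a₂ + 0.5 * r)| := lip_aux _ _ _
        _ = 0.5 * |q.1 - r| := by
            rw [show (a₂ + 0.5 * q.1) - (a₂ + 0.5 * r) = 0.5 * (q.1 - r) by ring, abs_mul]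
            norm_num
    have h1 : |q.1 - r| ≤ 0.25 * |q.1 - r| := by linarith
    have h1z : |q.1 - r| = 0 := by nlinarith [abs_nonneg (q.1 - r)]
    have h2z : |q.2 - r₂| = 0 := by nlinarith [abs_nonneg (q.2 - r₂)]
    have := abs_eq_zero.mp h1z
    have := abs_eq_zero.mp h2z
    apply Prod.ext <;> simp <;> linarith
  refine ⟨⟨(r, r₂), hsol, huniq⟩, ?_⟩
  intro p ⟨hp1, hp2⟩
  constructor
  · constructor
    · rw [hp1]; exact le_min hb₁ (le_max_right _ _)
    · rw [hp1]; exact min_le_left _ _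
  · constructor
    · rw [hp2]; exact le_min hb₂ (le_max_right _ _)
    · rw [hp2]; exact min_le_left _ _
end

section
/- No price equilibrium under maximal equity cross-ownership: let n ≥ 1, let Mˢ be an n×n real matrix with nonnegative entries in which every column sum equals exactly 1 (a left stochastic matrix), and let a ∈ ℝ^n with a ≥ 0 and ‖a‖₁ > 0. Then there is no s ∈ ℝ^n satisfying s = (a + Mˢ·s)⁺ (positive part taken componentwise). -/
open Matrix Finset

/-- No price equilibrium under maximal equity cross-ownership: if Mˢ is left stochastic
(nonnegative entries, all column sums equal 1) and a ≥ 0 with ‖a‖₁ > 0, then the equity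
equation s = (a + Mˢ·s)⁺ has no solution. -/
theorem no_equilibrium_maximal_cross_ownership {n : ℕ} (hn : 0 < n)
    (Ms : Matrix (Fin n) (Fin n) ℝ)
    (hMs_nonneg : ∀ i j, 0 ≤ Ms i j)
    (hMs_col : ∀ j, ∑ i, Ms i j = 1)
    (a : Fin n → ℝ) (ha : ∀ k, 0 ≤ a k) (ha_pos : 0 < ∑ k, |a k|) :
    ¬ ∃ s : Fin n → ℝ, ∀ k, s k = max (a k + Ms.mulVec s k) 0 := by
  rintro ⟨s, hs⟩
  have hle : ∀ k, a k + Ms.mulVec s k ≤ s k := fun k => (hs k) ▸ le_max_left _ _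
  have hsum : ∑ k, (a k + Ms.mulVec s k) ≤ ∑ k, s k := Finset.sum_le_sum fun k _ => hle k
  have hmv : ∑ k, Ms.mulVec s k = ∑ k, s k := by
    simp only [Matrix.mulVec, dotProduct]
    rw [Finset.sum_comm]
    simp [← Finset.sum_mul, hMs_col]
  rw [Finset.sum_add_distrib, hmv] at hsum
  have habs : ∑ k, |a k| = ∑ k, a k := Finset.sum_congr rfl fun k _ => abs_of_nonneg (ha k)
  rw [habs] at ha_pos
  linarith
end
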